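/- Let X be a real-valued random variable on a probability space, let {α_n}_{n≥1} be a nonnegative sequence of real numbers, and let {β_n}_{n≥0} be a nonnegative nondecreasing sequence of real numbers with β_0 = 0 and lim_{n→∞} β_n = ∞. Suppose there exists B > 0 such that β_{n+1} − β_n ≤ B·β_n for all n ≥ 1, and there exists c ≥ 1 such that c^{-1}·α_n ≤ β_n − β_{n−1} ≤ c·α_n for all n ≥ 1. Then E(|X|) < ∞ if and only if Σ_{n=1}^∞ α_n·P(|X| ≥ β_n) < ∞. -/

import Mathlib

open MeasureTheory Filter
open scoped ENNReal

/-- **Moment/series criterion (Theorem 2, second part).**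
Under the assumptions of the generalized Chung inequality,
`E|X| < ∞` if and only if `∑_{n≥1} α n * P(|X| ≥ β n) < ∞`. -/
theorem stmt_1 {Ω : Type*} [MeasurableSpace Ω] (μ : Measure Ω) [IsProbabilityMeasure μ]
    (X : Ω → ℝ) (hX : Measurable X)
    (α : ℕ → ℝ) (hα : ∀ n, 1 ≤ n → 0 ≤ α n)
    (β : ℕ → ℝ) (hβ0 : β 0 = 0) (hβmono : Monotone β) (hβnonneg : ∀ n, 0 ≤ β n)
    (hβtop : Tendsto β atTop atTop)
    (hBβ : ∃ B : ℝ, 0 < B ∧ ∀ n, 1 ≤ n → β (n + 1) - β n ≤ B * β n)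
    (hcα : ∃ c : ℝ, 1 ≤ c ∧
      ∀ n : ℕ, c⁻¹ * α (n + 1) ≤ β (n + 1) - β n ∧ β (n + 1) - β n ≤ c * α (n + 1)) :
    (∫⁻ ω, ENNReal.ofReal |X ω| ∂μ < ⊤) ↔
      (∑' n : ℕ, ENNReal.ofReal (α (n + 1)) * μ {ω | β (n + 1) ≤ |X ω|}) < ⊤ := by
  classical
  obtain ⟨B, hB, hBle⟩ := hBβ
  obtain ⟨c, hc1, hcle⟩ := hcα
  have hc0 : (0:ℝ) < c := lt_of_lt_of_le one_pos hc1
  have hdiff : ∀ n, 0 ≤ β (n + 1) - β n := fun n => sub_nonneg.2 (hβmono (Nat.le_succ n))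
  set f : ℕ → ℝ≥0∞ := fun n => ENNReal.ofReal (β (n + 1) - β n) with hf
  have hSmeas : ∀ n : ℕ, MeasurableSet {ω | β (n + 1) ≤ |X ω|} :=
    fun n => measurableSet_le measurable_const hX.abs
  have hαle : ∀ n, α (n + 1) ≤ c * (β (n + 1) - β n) := by
    intro n
    have h := (hcle n).1
    have h2 : c * (c⁻¹ * α (n + 1)) ≤ c * (β (n + 1) - β n) :=
      mul_le_mul_of_nonneg_left h hc0.le
    rwa [← mul_assoc, mul_inv_cancel₀ hc0.ne', one_mul] at h2
  constructor
  · -- E|X| < ∞ → series < ∞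
    intro hE
    have claim : ∀ t : ℝ, 0 ≤ t →
        (∑' n : ℕ, if β (n + 1) ≤ t then f n else 0) ≤ ENNReal.ofReal t := by
      intro t ht
      apply ENNReal.tsum_le_of_sum_range_le
      intro N
      have key : ∀ N : ℕ,
          (∑ n ∈ Finset.range N, if β (n + 1) ≤ t then β (n + 1) - β n else 0) ≤ β N ∧
          (∑ n ∈ Finset.range N, if β (n + 1) ≤ t then β (n + 1) - β n else 0) ≤ t := by
        intro N
        induction N with
        | zero => simp [hβ0, ht]
        | succ N ih =>
          rw [Finset.sum_range_succ]
          by_cases h : β (N + 1) ≤ t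
          · rw [if_pos h]
            exact ⟨by linarith [ih.1], by linarith [ih.1]⟩
          · rw [if_neg h, add_zero]
            exact ⟨ih.1.trans (hβmono (Nat.le_succ N)), ih.2⟩
      calc (∑ n ∈ Finset.range N, if β (n + 1) ≤ t then f n else 0)
          = ENNReal.ofReal (∑ n ∈ Finset.range N,
              if β (n + 1) ≤ t then β (n + 1) - β n else 0) := by
            have hnn : ∀ n ∈ Finset.range N,
                (0:ℝ) ≤ if β (n + 1) ≤ t then β (n + 1) - β n else 0 := by
              intro n _
              split
              · exact hdiff n
              · exact le_refl 0
            rw [ENNReal.ofReal_sum_of_nonneg hnn]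
            refine Finset.sum_congr rfl fun n _ => ?_
            split <;> simp [hf]
        _ ≤ ENNReal.ofReal t := ENNReal.ofReal_le_ofReal (key N).2
    have h2 : (∑' n : ℕ, f n * μ {ω | β (n + 1) ≤ |X ω|})
        ≤ ∫⁻ ω, ENNReal.ofReal |X ω| ∂μ := by
      calc (∑' n : ℕ, f n * μ {ω | β (n + 1) ≤ |X ω|})
          = ∑' n : ℕ, ∫⁻ ω, Set.indicator {ω | β (n + 1) ≤ |X ω|} (fun _ => f n) ω ∂μ :=
            tsum_congr fun n => (lintegral_indicator_const (hSmeas n) (f n)).symm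
        _ = ∫⁻ ω, ∑' n : ℕ, Set.indicator {ω | β (n + 1) ≤ |X ω|} (fun _ => f n) ω ∂μ :=
            (lintegral_tsum fun n => (measurable_const.indicator (hSmeas n)).aemeasurable).symm
        _ ≤ ∫⁻ ω, ENNReal.ofReal |X ω| ∂μ := by
            refine lintegral_mono fun ω => ?_
            have : ∀ n : ℕ, Set.indicator {ω | β (n + 1) ≤ |X ω|} (fun _ => f n) ω
                = if β (n + 1) ≤ |X ω| then f n else 0 := fun n => Set.indicator_apply _ _ _
            rw [tsum_congr this]
            exact claim _ (abs_nonneg _)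
    have h1 : ∀ n : ℕ, ENNReal.ofReal (α (n + 1)) * μ {ω | β (n + 1) ≤ |X ω|}
        ≤ ENNReal.ofReal c * (f n * μ {ω | β (n + 1) ≤ |X ω|}) := by
      intro n
      rw [← mul_assoc, ← ENNReal.ofReal_mul hc0.le]
      exact mul_le_mul_left (ENNReal.ofReal_le_ofReal (hαle n)) _
    calc (∑' n : ℕ, ENNReal.ofReal (α (n + 1)) * μ {ω | β (n + 1) ≤ |X ω|})
        ≤ ∑' n : ℕ, ENNReal.ofReal c * (f n * μ {ω | β (n + 1) ≤ |X ω|}) :=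
          ENNReal.tsum_le_tsum h1
      _ = ENNReal.ofReal c * ∑' n : ℕ, f n * μ {ω | β (n + 1) ≤ |X ω|} :=
          ENNReal.tsum_mul_left
      _ < ⊤ := ENNReal.mul_lt_top ENNReal.ofReal_lt_top (lt_of_le_of_lt h2 hE)
  · -- series < ∞ → E|X| < ∞
    intro hsum
    set A : ℕ → Set Ω := fun n => {ω | β n ≤ |X ω| ∧ |X ω| < β (n + 1)} with hA
    have hAmeas : ∀ n, MeasurableSet (A n) := fun n =>
      MeasurableSet.inter (measurableSet_le measurable_const hX.abs)
        (measurableSet_lt hX.abs measurable_const)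
    have hAdisj : Pairwise (Function.onFun Disjoint A) := by
      have key : ∀ i j : ℕ, i < j → Disjoint (A i) (A j) := by
        intro i j h
        refine Set.disjoint_left.2 fun ω hi hj => ?_
        have h1 : β (i + 1) ≤ β j := hβmono h
        have h2 : |X ω| < β (i + 1) := hi.2
        have h3 : β j ≤ |X ω| := hj.1
        linarith
      intro i j hij
      rcases hij.lt_or_gt with h | h
      · exact key i j h
      · exact (key j i h).symm
    have hcover : ∀ ω, ∃ n, ω ∈ A n := by
      intro ω
      have hex : ∃ m, |X ω| < β m := by
        obtain ⟨m, hm⟩ := (hβtop.eventually_ge_atTop (|X ω| + 1)).exists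
        exact ⟨m, by linarith⟩
      set n := Nat.find hex with hn
      have hn1 : n ≠ 0 := by
        intro h
        have hsp := Nat.find_spec hex
        rw [← hn, h, hβ0] at hsp
        exact absurd hsp (not_lt.2 (abs_nonneg _))
      obtain ⟨k, hk⟩ := Nat.exists_eq_succ_of_ne_zero hn1
      refine ⟨k, ⟨not_lt.1 (Nat.find_min hex ?_), ?_⟩⟩
      · omega
      · have := Nat.find_spec hex
        rwa [← hn, hk] at this
    have hpt : ∀ ω, ENNReal.ofReal |X ω|
        ≤ ∑' n : ℕ, Set.indicator (A n) (fun _ => ENNReal.ofReal (β (n + 1))) ω := by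
      intro ω
      obtain ⟨n, hn⟩ := hcover ω
      calc ENNReal.ofReal |X ω| ≤ ENNReal.ofReal (β (n + 1)) :=
            ENNReal.ofReal_le_ofReal hn.2.le
        _ = Set.indicator (A n) (fun _ => ENNReal.ofReal (β (n + 1))) ω :=
            (Set.indicator_of_mem hn (fun _ => ENNReal.ofReal (β (n + 1)))).symm
        _ ≤ _ := ENNReal.le_tsum n
    have hint : ∫⁻ ω, ENNReal.ofReal |X ω| ∂μ
        ≤ ∑' n : ℕ, ENNReal.ofReal (β (n + 1)) * μ (A n) := by
      calc ∫⁻ ω, ENNReal.ofReal |X ω| ∂μ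
          ≤ ∫⁻ ω, ∑' n : ℕ, Set.indicator (A n) (fun _ => ENNReal.ofReal (β (n + 1))) ω ∂μ :=
            lintegral_mono hpt
        _ = ∑' n : ℕ, ∫⁻ ω, Set.indicator (A n) (fun _ => ENNReal.ofReal (β (n + 1))) ω ∂μ :=
            lintegral_tsum fun n => (measurable_const.indicator (hAmeas n)).aemeasurable
        _ = ∑' n : ℕ, ENNReal.ofReal (β (n + 1)) * μ (A n) :=
            tsum_congr fun n => lintegral_indicator_const (hAmeas n) _
    -- core bound for the shifted sum
    have hcore : (∑' n : ℕ, ENNReal.ofReal (β (n + 1)) * μ (A (n + 1)))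
        ≤ ∑' k : ℕ, f k * μ {ω | β (k + 1) ≤ |X ω|} := by
      have step1 : ∀ n : ℕ, ENNReal.ofReal (β (n + 1)) * μ (A (n + 1))
          = ∑' k : ℕ, (if k < n + 1 then f k * μ (A (n + 1)) else 0) := by
        intro n
        rw [tsum_eq_sum (s := Finset.range (n + 1))
          (fun k hk => if_neg (by simpa using hk))]
        have hsum2 : (∑ k ∈ Finset.range (n + 1), if k < n + 1 then f k * μ (A (n + 1)) else 0)
            = (∑ k ∈ Finset.range (n + 1), f k) * μ (A (n + 1)) := by
          rw [Finset.sum_mul]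
          exact Finset.sum_congr rfl fun k hk => if_pos (Finset.mem_range.1 hk)
        rw [hsum2]
        congr 1
        rw [hf]
        rw [← ENNReal.ofReal_sum_of_nonneg (fun k _ => hdiff k), Finset.sum_range_sub, hβ0,
          sub_zero]
      calc (∑' n : ℕ, ENNReal.ofReal (β (n + 1)) * μ (A (n + 1)))
          = ∑' n : ℕ, ∑' k : ℕ, (if k < n + 1 then f k * μ (A (n + 1)) else 0) :=
            tsum_congr step1
        _ = ∑' k : ℕ, ∑' n : ℕ, (if k < n + 1 then f k * μ (A (n + 1)) else 0) :=
            ENNReal.tsum_comm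
        _ = ∑' k : ℕ, f k * ∑' n : ℕ, (if k < n + 1 then μ (A (n + 1)) else 0) := by
            refine tsum_congr fun k => ?_
            rw [← ENNReal.tsum_mul_left]
            exact tsum_congr fun n => by split <;> simp
        _ ≤ ∑' k : ℕ, f k * μ {ω | β (k + 1) ≤ |X ω|} := by
            refine ENNReal.tsum_le_tsum fun k => mul_le_mul_right ?_ _
            have heq : ∀ n : ℕ, (if k < n + 1 then μ (A (n + 1)) else 0)
                = μ (if k < n + 1 then A (n + 1) else ∅) := by
              intro n; split <;> simp
            rw [tsum_congr heq, ← measure_iUnion ?hd ?hm]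
            · apply measure_mono
              refine Set.iUnion_subset fun n => ?_
              split
              · rename_i hkn
                intro ω hω
                exact le_trans (hβmono (by omega : k + 1 ≤ n + 1)) hω.1
              · exact Set.empty_subset _
            case hd =>
              intro i j hij
              dsimp only [Function.onFun]
              split <;> split
              · exact (hAdisj (by omega : i + 1 ≠ j + 1))
              all_goals simp
            case hm =>
              intro n; split
              exacts [hAmeas _, MeasurableSet.empty]
    have hfα : ∀ k : ℕ, f k * μ {ω | β (k + 1) ≤ |X ω|}
        ≤ ENNReal.ofReal c * (ENNReal.ofReal (α (k + 1)) * μ {ω | β (k + 1) ≤ |X ω|}) := by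
      intro k
      rw [← mul_assoc, ← ENNReal.ofReal_mul hc0.le]
      exact mul_le_mul_left (ENNReal.ofReal_le_ofReal (hcle k).2) _
    have hS : (∑' k : ℕ, f k * μ {ω | β (k + 1) ≤ |X ω|}) < ⊤ := by
      calc (∑' k : ℕ, f k * μ {ω | β (k + 1) ≤ |X ω|})
          ≤ ∑' k : ℕ, ENNReal.ofReal c *
              (ENNReal.ofReal (α (k + 1)) * μ {ω | β (k + 1) ≤ |X ω|}) :=
            ENNReal.tsum_le_tsum hfα
        _ = ENNReal.ofReal c *
            ∑' k : ℕ, ENNReal.ofReal (α (k + 1)) * μ {ω | β (k + 1) ≤ |X ω|} :=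
            ENNReal.tsum_mul_left
        _ < ⊤ := ENNReal.mul_lt_top ENNReal.ofReal_lt_top hsum
    have hshift : (∑' n : ℕ, ENNReal.ofReal (β ((n + 1) + 1)) * μ (A (n + 1))) < ⊤ := by
      have hterm : ∀ n : ℕ, ENNReal.ofReal (β ((n + 1) + 1)) * μ (A (n + 1))
          ≤ ENNReal.ofReal (1 + B) * (ENNReal.ofReal (β (n + 1)) * μ (A (n + 1))) := by
        intro n
        rw [← mul_assoc, ← ENNReal.ofReal_mul (by linarith : (0:ℝ) ≤ 1 + B)]
        refine mul_le_mul_left (ENNReal.ofReal_le_ofReal ?_) _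
        have := hBle (n + 1) (by omega)
        nlinarith [hβnonneg (n + 1)]
      calc (∑' n : ℕ, ENNReal.ofReal (β ((n + 1) + 1)) * μ (A (n + 1)))
          ≤ ∑' n : ℕ, ENNReal.ofReal (1 + B) *
              (ENNReal.ofReal (β (n + 1)) * μ (A (n + 1))) :=
            ENNReal.tsum_le_tsum hterm
        _ = ENNReal.ofReal (1 + B) * ∑' n : ℕ, ENNReal.ofReal (β (n + 1)) * μ (A (n + 1)) :=
            ENNReal.tsum_mul_left
        _ < ⊤ := ENNReal.mul_lt_top ENNReal.ofReal_lt_top (lt_of_le_of_lt hcore hS)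
    refine lt_of_le_of_lt hint ?_
    rw [tsum_eq_zero_add' ENNReal.summable]
    refine ENNReal.add_lt_top.2 ⟨?_, hshift⟩
    exact ENNReal.mul_lt_top ENNReal.ofReal_lt_top (measure_lt_top μ _)
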